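/- arXiv:2201.12014 — 3 statements merged into one kernel-verified Lean document; each statement's English description precedes it below -/
import Mathlib

section
/- Let H be a real Hilbert space and let y, z : I_n → H be polynomial functions of degree at most k (with coefficients in a finite-dimensional subspace V_h ⊆ H). If ∫_{I_n} ⟨y'(t) - z(t), φ(t)⟩ dt = 0 for all V_h-valued polynomials φ of degree at most k-1, and y', z take values in V_h, then y'(t^G_μ) = z(t^G_μ) at each of the k Gauss quadrature nodes t^G_μ of I_n. -/
open MeasureTheory intervalIntegral

/-- If `y` is a `V_h`-valued polynomial of degree ≤ k with derivative `y'`, `z` is a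
`V_h`-valued polynomial of degree ≤ k, and `∫ ⟨y' - z, φ⟩ = 0` for all test functions
`φ(t) = ξ(t) • v` with `ξ` a real polynomial of degree ≤ k-1 and `v ∈ V_h`, then
`y' = z` at each of the `k` Gauss quadrature nodes of the interval. -/
theorem gauss_node_identity {H : Type*} [NormedAddCommGroup H]
    [InnerProductSpace ℝ H] [CompleteSpace H]
    (k : ℕ) (hk : 1 ≤ k) (a b : ℝ) (hab : a < b)
    (Vh : Submodule ℝ H)
    (tG ω : Fin k → ℝ)
    (htG : Function.Injective tG) (hmemG : ∀ μ, tG μ ∈ Set.Ioo a b)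
    (hω : ∀ μ, 0 < ω μ)
    (hexact : ∀ p : Polynomial ℝ, p.natDegree ≤ 2 * k - 1 →
      ∑ μ, ω μ * p.eval (tG μ) = ∫ s in a..b, p.eval s)
    (y y' z : ℝ → H) (cy cz : Fin (k + 1) → H)
    (hcy : ∀ i, cy i ∈ Vh) (hcz : ∀ i, cz i ∈ Vh)
    (hy' : ∀ t, y' t = ∑ i : Fin (k + 1), t ^ (i : ℕ) • cy i)
    (hz : ∀ t, z t = ∑ i : Fin (k + 1), t ^ (i : ℕ) • cz i)
    (hyderiv : ∀ t, HasDerivAt y (y' t) t)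
    (horth : ∀ ξ : Polynomial ℝ, ξ.natDegree ≤ k - 1 → ∀ v ∈ Vh,
      ∫ t in a..b, (inner ℝ (y' t - z t) (ξ.eval t • v) : ℝ) = 0) :
    ∀ μ, y' (tG μ) = z (tG μ) := by
  intro μ
  -- the Lagrange-type factor vanishing at all other nodes
  set ξ : Polynomial ℝ :=
    ∏ ν ∈ Finset.univ.erase μ, (Polynomial.X - Polynomial.C (tG ν)) with hξ
  have hξdeg : ξ.natDegree ≤ k - 1 := by
    refine le_trans (Polynomial.natDegree_prod_le _ _) ?_
    have : ∀ ν ∈ Finset.univ.erase μ,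
        (Polynomial.X - Polynomial.C (tG ν)).natDegree ≤ 1 := fun ν _ => by
      simp [Polynomial.natDegree_X_sub_C]
    refine le_trans (Finset.sum_le_sum this) ?_
    simp [Finset.card_erase_of_mem]
  have hξzero : ∀ ν, ν ≠ μ → ξ.eval (tG ν) = 0 := by
    intro ν hν
    rw [hξ, Polynomial.eval_prod]
    exact Finset.prod_eq_zero (Finset.mem_erase.2 ⟨hν, Finset.mem_univ ν⟩) (by simp)
  have hξne : ξ.eval (tG μ) ≠ 0 := by
    rw [hξ, Polynomial.eval_prod]
    refine Finset.prod_ne_zero_iff.2 fun ν hν => ?_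
    have : tG ν ≠ tG μ := fun h => (Finset.mem_erase.1 hν).1 (htG h)
    simp [sub_eq_zero, this.symm]
  -- main claim: for every v ∈ Vh, ⟨y'(tGμ) - z(tGμ), v⟩ = 0
  have key : ∀ v ∈ Vh, (inner ℝ (y' (tG μ) - z (tG μ)) v : ℝ) = 0 := by
    intro v hv
    set q : Polynomial ℝ :=
      ∑ i : Fin (k + 1),
        Polynomial.C (inner ℝ (cy i - cz i) v : ℝ) * Polynomial.X ^ (i : ℕ) with hq
    have hqdeg : q.natDegree ≤ k := by
      refine Polynomial.natDegree_sum_le_of_forall_le _ _ fun i _ => ?_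
      refine le_trans (Polynomial.natDegree_C_mul_le _ _) ?_
      simpa using Nat.le_of_lt_succ i.2
    have hqeval : ∀ t, q.eval t = (inner ℝ (y' t - z t) v : ℝ) := by
      intro t
      rw [hy', hz, ← Finset.sum_sub_distrib]
      simp only [← smul_sub, sum_inner, real_inner_smul_left, hq,
        Polynomial.eval_finset_sum, Polynomial.eval_mul, Polynomial.eval_C,
        Polynomial.eval_pow, Polynomial.eval_X]
      exact Finset.sum_congr rfl fun i _ => mul_comm _ _
    set p : Polynomial ℝ := ξ * q with hp
    have hpdeg : p.natDegree ≤ 2 * k - 1 := by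
      refine le_trans (Polynomial.natDegree_mul_le) ?_
      have := hξdeg
      omega
    have hpeval : ∀ t, p.eval t = (inner ℝ (y' t - z t) (ξ.eval t • v) : ℝ) := by
      intro t
      rw [real_inner_smul_right, hp, Polynomial.eval_mul, hqeval]
    have hint : (∫ s in a..b, p.eval s) = 0 := by
      have := horth ξ hξdeg v hv
      rw [← this]
      exact intervalIntegral.integral_congr fun t _ => hpeval t
    have hsum := hexact p hpdeg
    rw [hint] at hsum
    have hsingle : ∑ ν, ω ν * p.eval (tG ν) = ω μ * p.eval (tG μ) := by
      refine Finset.sum_eq_single μ (fun ν _ hν => ?_) (by simp)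
      rw [hp, Polynomial.eval_mul, hξzero ν hν]
      ring
    rw [hsingle] at hsum
    have h1 : p.eval (tG μ) = 0 := by
      have := (hω μ).ne'
      exact (mul_eq_zero.1 hsum).resolve_left this
    rw [hp, Polynomial.eval_mul, hqeval] at h1
    exact (mul_eq_zero.1 h1).resolve_left hξne
  have hmem : y' (tG μ) - z (tG μ) ∈ Vh := by
    rw [hy', hz, ← Finset.sum_sub_distrib]
    exact Submodule.sum_mem _ fun i _ => by
      rw [← smul_sub]
      exact Submodule.smul_mem _ _ (Submodule.sub_mem _ (hcy i) (hcz i))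
  have := key _ hmem
  rw [real_inner_self_eq_norm_sq] at this
  exact sub_eq_zero.1 (norm_eq_zero.1 (sq_eq_zero_iff.1 this))
end

section
/- Let H be a real Hilbert space and e : [a,b] → H a polynomial of degree at most k with derivative e'. If c_0 > 0, then ∫_a^b c_0 ⟨e'(t), Π^{k-1} e(t)⟩ dt = (c_0/2) ‖e(b)‖² − (c_0/2) ‖e(a)‖², where Π^{k-1} is the L^2(a,b)-orthogonal projection onto H-valued polynomials of degree at most k-1. -/
open MeasureTheory intervalIntegral

/-- For an `H`-valued polynomial `e` of degree at most `k` with derivative `e'` and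
`L²(a,b)`-projection `P = Π^{k-1} e` onto polynomials of degree at most `k-1`, and any
`c₀ > 0`, `∫_a^b c₀ ⟨e', P e⟩ dt = (c₀/2) ‖e b‖² - (c₀/2) ‖e a‖²`. -/
theorem energy_identity_projection {H : Type*} [NormedAddCommGroup H]
    [InnerProductSpace ℝ H] [CompleteSpace H]
    (k : ℕ) (hk : 1 ≤ k) (a b : ℝ) (hab : a < b) (c₀ : ℝ) (hc₀ : 0 < c₀)
    (e e' P : ℝ → H) (ce : Fin (k + 1) → H) (cP : Fin k → H)
    (he : ∀ t, e t = ∑ i : Fin (k + 1), t ^ (i : ℕ) • ce i)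
    (hderiv : ∀ t, HasDerivAt e (e' t) t)
    (hP : ∀ t, P t = ∑ i : Fin k, t ^ (i : ℕ) • cP i)
    (horth : ∀ (q : ℝ → H) (cq : Fin k → H),
      (∀ t, q t = ∑ i : Fin k, t ^ (i : ℕ) • cq i) →
      ∫ t in a..b, (inner ℝ (P t - e t) (q t) : ℝ) = 0) :
    ∫ t in a..b, c₀ * (inner ℝ (e' t) (P t) : ℝ) =
      c₀ / 2 * ‖e b‖ ^ 2 - c₀ / 2 * ‖e a‖ ^ 2 := by
  set cq : Fin k → H := fun j => ((j : ℕ) + 1 : ℝ) • ce j.succ with hcq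
  have heF : e = fun t => ∑ i : Fin (k + 1), t ^ (i : ℕ) • ce i := funext he
  have he'_eq : ∀ t, e' t = ∑ j : Fin k, t ^ (j : ℕ) • cq j := by
    intro t
    have h1 : HasDerivAt e
        (∑ i : Fin (k + 1), (((i : ℕ) : ℝ) * t ^ ((i : ℕ) - 1)) • ce i) t := by
      rw [heF]
      exact HasDerivAt.fun_sum fun i _ => (hasDerivAt_pow (i : ℕ) t).smul_const (ce i)
    have h2 := (hderiv t).unique h1
    rw [h2, Fin.sum_univ_succ]
    simp [hcq, smul_smul, mul_comm]
  have hce : Continuous e := by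
    rw [heF]
    exact continuous_finset_sum _ fun i _ => (continuous_pow _).smul continuous_const
  have hce' : Continuous e' := by
    have : e' = fun t => ∑ j : Fin k, t ^ (j : ℕ) • cq j := funext he'_eq
    rw [this]
    exact continuous_finset_sum _ fun i _ => (continuous_pow _).smul continuous_const
  have hcP : Continuous P := by
    have : P = fun t => ∑ i : Fin k, t ^ (i : ℕ) • cP i := funext hP
    rw [this]
    exact continuous_finset_sum _ fun i _ => (continuous_pow _).smul continuous_const
  have horth' : ∫ t in a..b, (inner ℝ (P t - e t) (e' t) : ℝ) = 0 := horth e' cq he'_eq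
  -- FTC part
  have hfund : ∀ t ∈ Set.uIcc a b,
      HasDerivAt (fun t => ‖e t‖ ^ 2 / 2) ((inner ℝ (e' t) (e t) : ℝ)) t := by
    intro t _
    have h1 : HasDerivAt (fun t => (inner ℝ (e t) (e t) : ℝ))
        ((inner ℝ (e t) (e' t) : ℝ) + (inner ℝ (e' t) (e t) : ℝ)) t :=
      (hderiv t).inner ℝ (hderiv t)
    have h2 : (fun t => (inner ℝ (e t) (e t) : ℝ)) = fun t => ‖e t‖ ^ 2 := by
      funext s; exact real_inner_self_eq_norm_sq (e s)
    rw [h2] at h1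
    have h3 := h1.div_const 2
    refine h3.congr_deriv ?_
    rw [real_inner_comm (e t) (e' t)]
    ring
  have hintegrable : IntervalIntegrable (fun t => (inner ℝ (e' t) (e t) : ℝ)) volume a b :=
    (hce'.inner hce).intervalIntegrable a b
  have hftc : ∫ t in a..b, (inner ℝ (e' t) (e t) : ℝ)
      = ‖e b‖ ^ 2 / 2 - ‖e a‖ ^ 2 / 2 :=
    intervalIntegral.integral_eq_sub_of_hasDerivAt hfund hintegrable
  -- assemble
  have hsplit : ∀ t, c₀ * (inner ℝ (e' t) (P t) : ℝ)
      = c₀ * (inner ℝ (e' t) (e t) : ℝ) + c₀ * (inner ℝ (P t - e t) (e' t) : ℝ) := by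
    intro t
    rw [inner_sub_left, real_inner_comm (P t) (e' t), real_inner_comm (e t) (e' t)]
    ring
  calc ∫ t in a..b, c₀ * (inner ℝ (e' t) (P t) : ℝ)
      = ∫ t in a..b, (c₀ * (inner ℝ (e' t) (e t) : ℝ)
          + c₀ * (inner ℝ (P t - e t) (e' t) : ℝ)) := by
        simp_rw [hsplit]
    _ = (∫ t in a..b, c₀ * (inner ℝ (e' t) (e t) : ℝ))
          + ∫ t in a..b, c₀ * (inner ℝ (P t - e t) (e' t) : ℝ) := by
        apply intervalIntegral.integral_add
        · exact (continuous_const.mul (hce'.inner hce)).intervalIntegrable a b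
        · exact (continuous_const.mul (((hcP.sub hce).inner hce'))).intervalIntegrable a b
    _ = c₀ * (‖e b‖ ^ 2 / 2 - ‖e a‖ ^ 2 / 2) + c₀ * 0 := by
        rw [intervalIntegral.integral_const_mul, hftc,
          intervalIntegral.integral_const_mul, horth']
    _ = c₀ / 2 * ‖e b‖ ^ 2 - c₀ / 2 * ‖e a‖ ^ 2 := by ring
end

section
/- Suppose the nonnegative sequences (A_n)_{n=0}^N and the real sequence (δ_n)_{n=0}^N satisfy A_n ≤ δ_n − δ_{n−1} + (1 + cτ) A_{n−1} + g for all n ≥ 2 and A_1 ≤ g, where c ≥ 0, τ > 0 with Nτ ≤ T, g ≥ 0, and |δ_n| ≤ g + ε A_n for all n with 0 < ε < 1/2. Then there exists C depending only on c, T, ε with A_n ≤ C · N · g for all 1 ≤ n ≤ N. -/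
set_option maxHeartbeats 1600000 in
/-- Abstract telescoping-plus-Gronwall argument: if nonnegative `A n` satisfy
`A n ≤ δ n - δ (n-1) + (1 + cτ) A (n-1) + g` for `2 ≤ n ≤ N`, `A 1 ≤ g`, with `c ≥ 0`,
`τ > 0`, `N τ ≤ T`, `g ≥ 0`, and `|δ n| ≤ g + ε A n` for all `n ≤ N` with `0 < ε < 1/2`,
then there is a constant `C` depending only on `c`, `T`, `ε` such that
`A n ≤ C N g` for all `1 ≤ n ≤ N`. -/
theorem telescoping_gronwall (c T ε : ℝ) (hc : 0 ≤ c) (hε₀ : 0 < ε) (hε : ε < 1 / 2) :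
    ∃ C : ℝ, 0 < C ∧
      ∀ (N : ℕ) (τ g : ℝ) (A δ : ℕ → ℝ),
        0 < τ → (N : ℝ) * τ ≤ T → 0 ≤ g →
        (∀ n, n ≤ N → 0 ≤ A n) →
        (∀ n, 2 ≤ n → n ≤ N → A n ≤ δ n - δ (n - 1) + (1 + c * τ) * A (n - 1) + g) →
        A 1 ≤ g →
        (∀ n, n ≤ N → |δ n| ≤ g + ε * A n) →
        ∀ n, 1 ≤ n → n ≤ N → A n ≤ C * N * g := by
  refine ⟨8 * Real.exp (2 * c * T), by positivity, ?_⟩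
  intro N τ g A δ hτ hNT hg hA hrec hA1 hδ n hn1 hnN
  have hP1 : (1:ℝ) ≤ 1 + 2 * c * τ := by nlinarith
  -- key induction: A m - δ m + g ≤ (1+2cτ)^(m-1) * (3 + m) * g
  have key : ∀ m : ℕ, 1 ≤ m → m ≤ N →
      A m - δ m + g ≤ (1 + 2 * c * τ) ^ (m - 1) * (3 + (m : ℝ)) * g := by
    intro m
    induction m with
    | zero => omega
    | succ k ih =>
      intro _ hmN
      rcases Nat.eq_zero_or_pos k with hk0 | hk1
      · subst hk0
        have h1N : 1 ≤ N := hmN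
        have hd1 := hδ 1 h1N
        have hA1' := hA 1 h1N
        have habs := abs_le.1 hd1
        norm_num
        nlinarith [habs.1, habs.2]
      · -- step: m = k+1 with k ≥ 1
        have hkN : k ≤ N := by omega
        have hrecm := hrec (k+1) (by omega) hmN
        simp only [Nat.add_sub_cancel] at hrecm
        have hdk := hδ k hkN
        have hAk := hA k hkN
        have habs := abs_le.1 hdk
        have hCk : (1 - ε) * A k ≤ A k - δ k + g := by nlinarith
        have hCknn : 0 ≤ A k - δ k + g := by nlinarith
        have hAk2 : A k ≤ 2 * (A k - δ k + g) := by nlinarith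
        have ihk := ih hk1 hkN
        have hPnn : (0:ℝ) ≤ (1 + 2 * c * τ) ^ (k - 1) := by positivity
        have hPge : (1:ℝ) ≤ (1 + 2 * c * τ) ^ (k - 1) := one_le_pow₀ hP1
        -- A (k+1) - δ (k+1) + g ≤ (1+2cτ)(A k - δ k + g) + g
        have hstep : A (k+1) - δ (k+1) + g ≤ (1 + 2*c*τ) * (A k - δ k + g) + g := by
          nlinarith [mul_nonneg (mul_nonneg hc hτ.le) hAk]
        have hpow : (1 + 2*c*τ) * (1 + 2*c*τ) ^ (k - 1) = (1 + 2*c*τ) ^ k := by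
          rw [← pow_succ']
          congr 1
          omega
        have hPk : (1:ℝ) ≤ (1 + 2 * c * τ) ^ k := one_le_pow₀ hP1
        calc A (k+1) - δ (k+1) + g ≤ (1 + 2*c*τ) * (A k - δ k + g) + g := hstep
          _ ≤ (1 + 2*c*τ) * ((1 + 2 * c * τ) ^ (k - 1) * (3 + (k:ℝ)) * g) + g := by
              have := mul_le_mul_of_nonneg_left ihk (by linarith : (0:ℝ) ≤ 1 + 2*c*τ)
              linarith
          _ ≤ (1 + 2*c*τ) ^ k * (3 + ((k:ℝ)+1)) * g := by
              have h1 : (1 + 2*c*τ) * ((1 + 2 * c * τ) ^ (k - 1) * (3 + (k:ℝ)) * g)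
                  = (1 + 2*c*τ) ^ k * (3 + (k:ℝ)) * g := by
                rw [← hpow]; ring
              rw [h1]
              nlinarith [hPk]
          _ = (1 + 2*c*τ) ^ (k+1-1) * (3 + ((k+1:ℕ):ℝ)) * g := by
              push_cast; norm_num
  -- conclude
  have hkey := key n hn1 hnN
  have hdn := hδ n hnN
  have hAn := hA n hnN
  have habs := abs_le.1 hdn
  have hAn2 : A n ≤ 2 * (A n - δ n + g) := by nlinarith
  -- bound the power by the exponential
  have hexp : (1 + 2 * c * τ) ^ (n - 1) ≤ Real.exp (2 * c * T) := by
    calc (1 + 2 * c * τ) ^ (n - 1) ≤ Real.exp (2 * c * τ) ^ (n - 1) := by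
          apply pow_le_pow_left₀ (by positivity)
          linarith [Real.add_one_le_exp (2 * c * τ)]
      _ = Real.exp (((n - 1 : ℕ):ℝ) * (2 * c * τ)) := by
          rw [← Real.exp_nat_mul]
      _ ≤ Real.exp (2 * c * T) := by
          apply Real.exp_le_exp.2
          have h1 : ((n - 1 : ℕ) : ℝ) ≤ (N : ℝ) := by
            exact_mod_cast Nat.le_trans (Nat.sub_le n 1) hnN
          have h2cτ : (0:ℝ) ≤ 2 * c * τ := by positivity
          have h2 := mul_le_mul_of_nonneg_right h1 h2cτ
          have h3 : 2 * c * ((N:ℝ) * τ) ≤ 2 * c * T :=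
            mul_le_mul_of_nonneg_left hNT (by linarith : (0:ℝ) ≤ 2 * c)
          linarith
  have hn4 : (3 + (n:ℝ)) ≤ 4 * N := by
    have h1 : (1:ℝ) ≤ (n:ℝ) := by exact_mod_cast hn1
    have h2 : (n:ℝ) ≤ (N:ℝ) := by exact_mod_cast hnN
    linarith
  have hPnn : (0:ℝ) ≤ (1 + 2 * c * τ) ^ (n - 1) := by positivity
  have hNg : (0:ℝ) ≤ (N:ℝ) * g := by positivity
  have h3 : (1 + 2 * c * τ) ^ (n - 1) * (3 + (n:ℝ)) * g ≤ Real.exp (2*c*T) * (4 * N) * g := by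
    have hexpnn : (0:ℝ) ≤ Real.exp (2*c*T) := (Real.exp_pos _).le
    have h34 : (0:ℝ) ≤ 3 + (n:ℝ) := by positivity
    nlinarith [mul_le_mul hexp hn4 h34 hexpnn]
  calc A n ≤ 2 * (A n - δ n + g) := hAn2
    _ ≤ 2 * ((1 + 2 * c * τ) ^ (n - 1) * (3 + (n:ℝ)) * g) := by linarith
    _ ≤ 2 * (Real.exp (2*c*T) * (4 * N) * g) := by linarith
    _ = 8 * Real.exp (2 * c * T) * N * g := by ring
end
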